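/- Let p be a prime and let e ≥ 0 be an integer. The p-adic exponential exp_p(x) = Σ_{m ≥ 0} x^m/m! (which converges for x ∈ ℚ_p with ‖x‖_p < p^{−1/(p−1)}) restricts to a bijection from the set {x ∈ ℚ_p : ‖x‖_p < p^{−e − 1/(p−1)}} onto the set {y ∈ ℚ_p : ‖y − 1‖_p < p^{−e − 1/(p−1)}}, and satisfies exp_p(x₁ + x₂) = exp_p(x₁)·exp_p(x₂) for all x₁, x₂ in this set; thus exp_p is a group isomorphism from the additive group {x : ‖x‖_p < p^{−e − 1/(p−1)}} to the multiplicative group {y : ‖y − 1‖_p < p^{−e − 1/(p−1)}}. -/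

import Mathlib

/-- The `p`-adic exponential, given by the usual power series `∑ xᵐ/m!`. -/
noncomputable def padicExp (p : ℕ) [Fact p.Prime] (x : ℚ_[p]) : ℚ_[p] :=
  ∑' m : ℕ, x ^ m / (m.factorial : ℚ_[p])

namespace PadicExpAux

open IsUltrametricDist Filter
open scoped ENNReal NNReal

/-- The exponent `1/(p-1)`. -/
noncomputable def T (p : ℕ) : ℝ := 1 / ((p : ℝ) - 1)

/-- The radius `p ^ (-(e + 1/(p-1)))`. -/
noncomputable def Bd (p e : ℕ) : ℝ := (p : ℝ) ^ (-((e : ℝ) + T p))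

variable {p : ℕ} [hp : Fact p.Prime]

lemma one_lt_p : (1 : ℝ) < (p : ℝ) := by exact_mod_cast hp.out.one_lt

lemma p_pos : (0 : ℝ) < (p : ℝ) := lt_trans one_pos one_lt_p

lemma T_pos : 0 < T p := by
  have := one_lt_p (p := p)
  rw [T]
  apply div_pos one_pos; linarith

lemma pt_ge_one : 1 ≤ (p : ℝ) ^ (T p) := by
  have : (p : ℝ) ^ (0 : ℝ) ≤ (p : ℝ) ^ (T p) :=
    (Real.rpow_le_rpow_left_iff one_lt_p).mpr T_pos.le
  simpa using this

lemma B_pos {e : ℕ} : 0 < Bd p e := Real.rpow_pos_of_pos p_pos _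

lemma B_lt_one {e : ℕ} : Bd p e < 1 := by
  apply Real.rpow_lt_one_of_one_lt_of_neg one_lt_p
  have := T_pos (p := p)
  have : (0:ℝ) ≤ (e : ℝ) := Nat.cast_nonneg e
  have := T_pos (p := p)
  linarith

/-- Key discreteness lemma. -/
lemma keyA {e : ℕ} {x : ℚ_[p]} (hx : ‖x‖ < Bd p e) : ‖x‖ * (p : ℝ) ^ (T p) ≤ Bd p e := by
  rcases eq_or_ne x 0 with rfl | h0
  · simp only [norm_zero, zero_mul]
    exact B_pos.le
  · have hp1 : (1 : ℝ) < p := one_lt_p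
    rw [Padic.norm_eq_zpow_neg_valuation h0] at hx ⊢
    rw [← Real.rpow_intCast (p : ℝ) (-x.valuation)] at hx ⊢
    rw [Bd] at hx ⊢
    rw [← Real.rpow_add p_pos, Real.rpow_le_rpow_left_iff hp1]
    have hv : (e : ℝ) + T p < (x.valuation : ℝ) := by
      have := (Real.rpow_lt_rpow_left_iff hp1).mp hx
      push_cast at this
      linarith
    push_cast
    rcases eq_or_ne p 2 with hp2 | hp2
    · have hT : T p = 1 := by subst hp2; norm_num [T]
      rw [hT] at hv ⊢
      have h1 : (e : ℤ) + 1 < x.valuation := by exact_mod_cast hv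
      have h2 : (e : ℤ) + 2 ≤ x.valuation := by omega
      have h3 : (e : ℝ) + 2 ≤ (x.valuation : ℝ) := by exact_mod_cast h2
      linarith
    · have hT2 : T p ≤ 1 / 2 := by
        have h3 : 3 ≤ p := by
          have := hp.out.two_le
          rcases Nat.lt_or_ge p 3 with h | h
          · interval_cases p <;> simp_all
          · exact h
        have h3' : (3 : ℝ) ≤ (p : ℝ) := by exact_mod_cast h3
        rw [T]
        rw [div_le_div_iff₀ (by linarith) (by norm_num)]
        linarith
      have h1 : (e : ℝ) < (x.valuation : ℝ) := by
        have := T_pos (p := p); linarith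
      have h2 : (e : ℤ) < x.valuation := by exact_mod_cast h1
      have h3 : (e : ℤ) + 1 ≤ x.valuation := by omega
      have h4 : (e : ℝ) + 1 ≤ (x.valuation : ℝ) := by exact_mod_cast h3
      linarith

lemma digits_sum_pos {m : ℕ} (hm : 1 ≤ m) : 1 ≤ (p.digits m).sum := by
  have h0 : m ≠ 0 := by omega
  have hne : p.digits m ≠ [] := Nat.digits_ne_nil_iff_ne_zero.mpr h0
  have hmem : (p.digits m).getLast hne ∈ p.digits m := List.getLast_mem hne
  have h1 : 1 ≤ (p.digits m).getLast hne :=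
    Nat.one_le_iff_ne_zero.mpr (Nat.getLast_digit_ne_zero p h0)
  exact h1.trans (List.single_le_sum (fun x _ => Nat.zero_le x) _ hmem)

lemma fact_bound {m : ℕ} (hm : 1 ≤ m) :
    ‖((m.factorial : ℕ) : ℚ_[p])‖⁻¹ ≤ ((p : ℝ) ^ (T p)) ^ (m - 1) := by
  have hp1 : (1 : ℝ) < p := one_lt_p
  have hne : ((m.factorial : ℕ) : ℚ_[p]) ≠ 0 :=
    Nat.cast_ne_zero.mpr m.factorial_ne_zero
  rw [Padic.norm_eq_zpow_neg_valuation hne, Padic.valuation_natCast, zpow_neg, inv_inv]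
  rw [← Real.rpow_natCast ((p : ℝ) ^ (T p)) (m - 1), ← Real.rpow_mul p_pos.le,
    ← Real.rpow_intCast (p : ℝ) ((padicValNat p m.factorial : ℤ))]
  rw [Real.rpow_le_rpow_left_iff hp1]
  have hv : (p - 1) * padicValNat p m.factorial ≤ m - 1 := by
    rw [sub_one_mul_padicValNat_factorial]
    exact Nat.sub_le_sub_left (digits_sum_pos hm) m
  have hc : ((p : ℝ) - 1) * (padicValNat p m.factorial : ℝ) ≤ (m : ℝ) - 1 := by
    have := (Nat.cast_le (α := ℝ)).mpr hv
    push_cast [Nat.cast_sub hp.out.one_lt.le, Nat.cast_sub hm] at this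
    exact this
  have hm1 : ((m - 1 : ℕ) : ℝ) = (m : ℝ) - 1 := by
    push_cast [Nat.cast_sub hm]; ring
  rw [hm1, T, div_mul_eq_mul_div, one_mul, le_div_iff₀ (by linarith), Int.cast_natCast]
  linarith

lemma term_bound (x : ℚ_[p]) {m : ℕ} (hm : 1 ≤ m) :
    ‖x ^ m / (m.factorial : ℚ_[p])‖ ≤ ‖x‖ * (‖x‖ * (p : ℝ) ^ (T p)) ^ (m - 1) := by
  obtain ⟨k, rfl⟩ : ∃ k, m = k + 1 := ⟨m - 1, by omega⟩
  rw [norm_div, norm_pow, div_eq_mul_inv]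
  simp only [Nat.add_sub_cancel]
  calc ‖x‖ ^ (k + 1) * ‖((k + 1).factorial : ℚ_[p])‖⁻¹
      ≤ ‖x‖ ^ (k + 1) * ((p : ℝ) ^ (T p)) ^ k := by
        have h := fact_bound (p := p) (m := k + 1) (by omega)
        simp only [Nat.add_sub_cancel] at h
        exact mul_le_mul_of_nonneg_left h (by positivity)
    _ = ‖x‖ * (‖x‖ * (p : ℝ) ^ (T p)) ^ k := by rw [mul_pow, pow_succ]; ring

lemma summable_aux {x : ℚ_[p]} (hx : ‖x‖ * (p : ℝ) ^ (T p) < 1) :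
    Summable fun m : ℕ => x ^ m / (m.factorial : ℚ_[p]) := by
  have hr0 : 0 ≤ ‖x‖ * (p : ℝ) ^ (T p) := by positivity
  apply Summable.of_norm_bounded
    (g := fun m => (p : ℝ) ^ (T p) * (‖x‖ * (p : ℝ) ^ (T p)) ^ m)
    ((summable_geometric_of_lt_one hr0 hx).mul_left _)
  intro m
  rcases Nat.eq_zero_or_pos m with rfl | hm
  · simpa using pt_ge_one
  · obtain ⟨k, rfl⟩ : ∃ k, m = k + 1 := ⟨m - 1, by omega⟩
    calc ‖x ^ (k + 1) / ((k + 1).factorial : ℚ_[p])‖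
        ≤ ‖x‖ * (‖x‖ * (p : ℝ) ^ (T p)) ^ k := by
          have := term_bound x (p := p) (m := k + 1) (by omega)
          simpa using this
      _ ≤ ((p : ℝ) ^ (T p) * (‖x‖ * (p : ℝ) ^ (T p))) * (‖x‖ * (p : ℝ) ^ (T p)) ^ k := by
          apply mul_le_mul_of_nonneg_right _ (by positivity)
          nlinarith [pt_ge_one (p := p), norm_nonneg x,
            Real.rpow_pos_of_pos (p_pos (p := p)) (T p)]
      _ = (p : ℝ) ^ (T p) * (‖x‖ * (p : ℝ) ^ (T p)) ^ (k + 1) := by ring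

open NormedSpace in
lemma exp_eq (x : ℚ_[p]) : padicExp p x = exp x := by
  rw [exp_eq_tsum ℚ_[p], padicExp]
  exact tsum_congr fun n => by rw [smul_eq_mul, ← div_eq_inv_mul]

lemma exp_zero' : padicExp p (0 : ℚ_[p]) = 1 := by
  rw [exp_eq]; exact NormedSpace.exp_zero

open NormedSpace in
lemma mem_ball {x : ℚ_[p]} (hx : ‖x‖ * (p : ℝ) ^ (T p) < 1) :
    x ∈ Metric.eball (0 : ℚ_[p]) (expSeries ℚ_[p] ℚ_[p]).radius := by
  have hpt : (0:ℝ) < (p : ℝ) ^ (T p) := Real.rpow_pos_of_pos p_pos _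
  have hrad : ((Real.toNNReal ((p : ℝ) ^ (-(T p)))) : ℝ≥0∞) ≤
      (expSeries ℚ_[p] ℚ_[p]).radius := by
    apply FormalMultilinearSeries.le_radius_of_bound _ 1
    intro n
    have hnorm : ‖expSeries ℚ_[p] ℚ_[p] n‖ = ‖(((n.factorial : ℕ) : ℚ_[p]))⁻¹‖ := by
      rw [show expSeries ℚ_[p] ℚ_[p] n = (((n.factorial : ℕ) : ℚ_[p]))⁻¹ •
          ContinuousMultilinearMap.mkPiAlgebraFin ℚ_[p] n ℚ_[p] from rfl,
        norm_smul (((n.factorial : ℕ) : ℚ_[p]))⁻¹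
          (ContinuousMultilinearMap.mkPiAlgebraFin ℚ_[p] n ℚ_[p]),
        ContinuousMultilinearMap.norm_mkPiAlgebraFin, mul_one]
    have hfac : ‖(((n.factorial : ℕ) : ℚ_[p]))⁻¹‖ ≤ ((p : ℝ) ^ (T p)) ^ n := by
      rw [norm_inv]
      rcases Nat.eq_zero_or_pos n with rfl | hn
      · simp
      · calc ‖((n.factorial : ℕ) : ℚ_[p])‖⁻¹ ≤ ((p : ℝ) ^ (T p)) ^ (n - 1) := fact_bound hn
          _ ≤ ((p : ℝ) ^ (T p)) ^ n := pow_le_pow_right₀ pt_ge_one (by omega)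
    have hcoe : ((Real.toNNReal ((p : ℝ) ^ (-(T p)))) : ℝ) = (p : ℝ) ^ (-(T p)) :=
      Real.coe_toNNReal _ (Real.rpow_pos_of_pos p_pos _).le
    rw [hnorm, hcoe]
    calc ‖(((n.factorial : ℕ) : ℚ_[p]))⁻¹‖ * ((p : ℝ) ^ (-(T p))) ^ n
        ≤ ((p : ℝ) ^ (T p)) ^ n * ((p : ℝ) ^ (-(T p))) ^ n := by
          apply mul_le_mul_of_nonneg_right hfac
          positivity
      _ = 1 := by
          rw [← mul_pow, ← Real.rpow_add p_pos]
          simp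
  rw [mem_emetric_ball_zero_iff]
  refine lt_of_lt_of_le ?_ hrad
  rw [← ofReal_norm_eq_enorm]
  apply ENNReal.coe_lt_coe.mpr
  apply (Real.toNNReal_lt_toNNReal_iff (Real.rpow_pos_of_pos p_pos _)).mpr
  rw [Real.rpow_neg p_pos.le, ← one_div]
  exact (lt_div_iff₀ hpt).mpr hx

lemma exp_add {x y : ℚ_[p]} (hx : ‖x‖ * (p : ℝ) ^ (T p) < 1)
    (hy : ‖y‖ * (p : ℝ) ^ (T p) < 1) :
    padicExp p (x + y) = padicExp p x * padicExp p y := by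
  rw [exp_eq, exp_eq, exp_eq]
  exact NormedSpace.exp_add_of_mem_ball (𝕂 := ℚ_[p]) (mem_ball hx) (mem_ball hy)

set_option maxHeartbeats 1000000 in
lemma exp_sub_one_sub {x : ℚ_[p]} (hx : ‖x‖ * (p : ℝ) ^ (T p) < 1) :
    ‖padicExp p x - 1 - x‖ ≤ ‖x‖ * (‖x‖ * (p : ℝ) ^ (T p)) := by
  have hs := summable_aux hx
  have hs1 : Summable fun m : ℕ => x ^ (m + 1) / ((m + 1).factorial : ℚ_[p]) :=
    ((summable_nat_add_iff (f := fun m : ℕ => x ^ m / (m.factorial : ℚ_[p])) 1).mpr hs)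
  have h1 : padicExp p x =
      1 + (x + ∑' m : ℕ, x ^ (m + 2) / ((m + 2).factorial : ℚ_[p])) := by
    rw [padicExp, hs.tsum_eq_zero_add]
    congr 1
    · simp
    rw [hs1.tsum_eq_zero_add]
    congr 1
    · simp
  have h2 : padicExp p x - 1 - x = ∑' m : ℕ, x ^ (m + 2) / ((m + 2).factorial : ℚ_[p]) := by
    rw [h1]; ring
  rw [h2]
  apply norm_tsum_le_of_forall_le_of_nonneg (by positivity)
  intro m
  have hr1 : ‖x‖ * (p : ℝ) ^ (T p) ≤ 1 := hx.le
  have hr0 : 0 ≤ ‖x‖ * (p : ℝ) ^ (T p) := by positivity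
  calc ‖x ^ (m + 2) / ((m + 2).factorial : ℚ_[p])‖
      ≤ ‖x‖ * (‖x‖ * (p : ℝ) ^ (T p)) ^ (m + 1) := by
        have := term_bound x (p := p) (m := m + 2) (by omega)
        simpa using this
    _ ≤ ‖x‖ * (‖x‖ * (p : ℝ) ^ (T p)) ^ 1 := by
        apply mul_le_mul_of_nonneg_left _ (norm_nonneg x)
        exact pow_le_pow_of_le_one hr0 hr1 (by omega)
    _ = ‖x‖ * (‖x‖ * (p : ℝ) ^ (T p)) := by ring

lemma norm_exp_sub_one {x : ℚ_[p]} (hx : ‖x‖ * (p : ℝ) ^ (T p) < 1) :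
    ‖padicExp p x - 1‖ = ‖x‖ := by
  rcases eq_or_ne x 0 with rfl | h0
  · simp [exp_zero']
  · have hxpos : 0 < ‖x‖ := norm_pos_iff.mpr h0
    have hlt : ‖padicExp p x - 1 - x‖ < ‖x‖ := by
      refine lt_of_le_of_lt (exp_sub_one_sub hx) ?_
      calc ‖x‖ * (‖x‖ * (p : ℝ) ^ (T p)) < ‖x‖ * 1 := by
            exact mul_lt_mul_of_pos_left hx hxpos
        _ = ‖x‖ := mul_one _
    have h3 : padicExp p x - 1 = (padicExp p x - 1 - x) + x := by ring
    rw [h3, norm_add_eq_max_of_norm_ne_norm (ne_of_lt hlt), max_eq_right hlt.le]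

lemma norm_lt_one {x : ℚ_[p]} (hx : ‖x‖ * (p : ℝ) ^ (T p) < 1) : ‖x‖ < 1 := by
  have h1 := pt_ge_one (p := p)
  nlinarith [norm_nonneg x]

lemma norm_exp {x : ℚ_[p]} (hx : ‖x‖ * (p : ℝ) ^ (T p) < 1) : ‖padicExp p x‖ = 1 := by
  have h := norm_exp_sub_one hx
  have hlt : ‖padicExp p x - 1‖ < 1 := by rw [h]; exact norm_lt_one hx
  have h3 : padicExp p x = (padicExp p x - 1) + 1 := by ring
  have h1 : ‖(1 : ℚ_[p])‖ = 1 := norm_one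
  rw [h3, norm_add_eq_max_of_norm_ne_norm (by rw [h1]; exact ne_of_lt hlt)]
  rw [h1, max_eq_right hlt.le]

lemma exp_ne_zero {x : ℚ_[p]} (hx : ‖x‖ * (p : ℝ) ^ (T p) < 1) : padicExp p x ≠ 0 := by
  intro h
  have := norm_exp hx
  rw [h, norm_zero] at this
  norm_num at this

lemma norm_sub_small {a b : ℚ_[p]} (ha : ‖a‖ * (p : ℝ) ^ (T p) < 1)
    (hb : ‖b‖ * (p : ℝ) ^ (T p) < 1) : ‖a - b‖ * (p : ℝ) ^ (T p) < 1 := by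
  have hpt : (0:ℝ) < (p : ℝ) ^ (T p) := Real.rpow_pos_of_pos p_pos _
  have h := Padic.nonarchimedean a (-b)
  rw [← sub_eq_add_neg, norm_neg] at h
  rcases max_cases ‖a‖ ‖b‖ with ⟨he, _⟩ | ⟨he, _⟩ <;> rw [he] at h <;>
    nlinarith

lemma norm_exp_sub_exp {a b : ℚ_[p]} (ha : ‖a‖ * (p : ℝ) ^ (T p) < 1)
    (hb : ‖b‖ * (p : ℝ) ^ (T p) < 1) :
    ‖padicExp p a - padicExp p b‖ = ‖a - b‖ := by
  have hab := norm_sub_small ha hb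
  have h1 : padicExp p a = padicExp p b * padicExp p (a - b) := by
    rw [← exp_add hb hab]
    congr 1
    ring
  calc ‖padicExp p a - padicExp p b‖
      = ‖padicExp p b * (padicExp p (a - b) - 1)‖ := by rw [h1]; ring_nf
    _ = ‖padicExp p b‖ * ‖padicExp p (a - b) - 1‖ := norm_mul _ _
    _ = ‖a - b‖ := by rw [norm_exp hb, norm_exp_sub_one hab, one_mul]

lemma small {e : ℕ} {x : ℚ_[p]} (hx : ‖x‖ < Bd p e) : ‖x‖ * (p : ℝ) ^ (T p) < 1 :=
  lt_of_le_of_lt (keyA hx) B_lt_one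

end PadicExpAux

open PadicExpAux IsUltrametricDist Filter in
theorem padicExp_isom (p : ℕ) [Fact p.Prime] (e : ℕ) :
    (∀ x : ℚ_[p], ‖x‖ < (p : ℝ) ^ (-(1 / ((p : ℝ) - 1))) →
      Summable fun m : ℕ => x ^ m / (m.factorial : ℚ_[p])) ∧
    Set.BijOn (padicExp p)
      {x : ℚ_[p] | ‖x‖ < (p : ℝ) ^ (-((e : ℝ) + 1 / ((p : ℝ) - 1)))}
      {y : ℚ_[p] | ‖y - 1‖ < (p : ℝ) ^ (-((e : ℝ) + 1 / ((p : ℝ) - 1)))} ∧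
    (∀ x₁ x₂ : ℚ_[p],
      ‖x₁‖ < (p : ℝ) ^ (-((e : ℝ) + 1 / ((p : ℝ) - 1))) →
      ‖x₂‖ < (p : ℝ) ^ (-((e : ℝ) + 1 / ((p : ℝ) - 1))) →
      padicExp p (x₁ + x₂) = padicExp p x₁ * padicExp p x₂) := by
  have hBd : (p : ℝ) ^ (-((e : ℝ) + 1 / ((p : ℝ) - 1))) = Bd p e := rfl
  have hBd0 : (p : ℝ) ^ (-(1 / ((p : ℝ) - 1))) = Bd p 0 := by
    rw [Bd]; norm_num [T]
  refine ⟨?_, ⟨?_, ?_, ?_⟩, ?_⟩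
  · -- summability
    intro x hx
    rw [hBd0] at hx
    exact summable_aux (small hx)
  · -- MapsTo
    intro x hx
    simp only [Set.mem_setOf_eq, hBd] at hx ⊢
    rw [norm_exp_sub_one (small hx)]
    exact hx
  · -- InjOn
    intro a ha b hb hab
    simp only [Set.mem_setOf_eq, hBd] at ha hb
    have h := norm_exp_sub_exp (small ha) (small hb)
    rw [hab, sub_self, norm_zero] at h
    have := (norm_eq_zero.mp h.symm)
    exact sub_eq_zero.mp this
  · -- SurjOn
    intro y hy
    simp only [Set.mem_setOf_eq, hBd] at hy
    set B := Bd p e with hB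
    have hB0 : 0 ≤ B := B_pos.le
    have hB1 : B < 1 := B_lt_one
    set F : ℚ_[p] → ℚ_[p] := fun u => u * (padicExp p (u - 1))⁻¹ with hF
    set u : ℕ → ℚ_[p] := fun n => F^[n] y with hu
    have hstep : ∀ w : ℚ_[p], ‖w - 1‖ < B → ‖F w - 1‖ ≤ ‖w - 1‖ * B := by
      intro w hw
      have hsm : ‖w - 1‖ * (p : ℝ) ^ (T p) < 1 := small hw
      have hne : padicExp p (w - 1) ≠ 0 := exp_ne_zero hsm
      have h1 : F w - 1 = (w - padicExp p (w - 1)) * (padicExp p (w - 1))⁻¹ := by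
        rw [hF]
        field_simp
      have h2 : w - padicExp p (w - 1) = -(padicExp p (w - 1) - 1 - (w - 1)) := by ring
      rw [h1, norm_mul, norm_inv, norm_exp hsm, inv_one, mul_one, h2, norm_neg]
      calc ‖padicExp p (w - 1) - 1 - (w - 1)‖
          ≤ ‖w - 1‖ * (‖w - 1‖ * (p : ℝ) ^ (T p)) := exp_sub_one_sub hsm
        _ ≤ ‖w - 1‖ * B := by
            apply mul_le_mul_of_nonneg_left (keyA hw) (norm_nonneg _)
    have hun : ∀ n, ‖u n - 1‖ ≤ ‖y - 1‖ * B ^ n := by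
      intro n
      induction n with
      | zero => simp [hu]
      | succ n ih =>
        have hlt : ‖u n - 1‖ < B := by
          refine lt_of_le_of_lt ih ?_
          calc ‖y - 1‖ * B ^ n ≤ ‖y - 1‖ * 1 := by
                apply mul_le_mul_of_nonneg_left _ (norm_nonneg _)
                exact pow_le_one₀ hB0 hB1.le
            _ < B := by rw [mul_one]; exact hy
        have huF : u (n + 1) = F (u n) := by
          simp only [hu, Function.iterate_succ_apply']
        rw [huF]
        calc ‖F (u n) - 1‖ ≤ ‖u n - 1‖ * B := hstep _ hlt
          _ ≤ (‖y - 1‖ * B ^ n) * B := mul_le_mul_of_nonneg_right ih hB0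
          _ = ‖y - 1‖ * B ^ (n + 1) := by ring
    have hulst : ∀ n, ‖u n - 1‖ < B := by
      intro n
      refine lt_of_le_of_lt (hun n) ?_
      calc ‖y - 1‖ * B ^ n ≤ ‖y - 1‖ * 1 := by
            apply mul_le_mul_of_nonneg_left _ (norm_nonneg _)
            exact pow_le_one₀ hB0 hB1.le
        _ < B := by rw [mul_one]; exact hy
    set δ : ℕ → ℚ_[p] := fun n => u n - 1 with hδ
    have hsummable : Summable δ := by
      apply Summable.of_norm_bounded (g := fun n => ‖y - 1‖ * B ^ n)
        ((summable_geometric_of_lt_one hB0 hB1).mul_left _)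
      exact hun
    set x : ℚ_[p] := ∑' n, δ n with hx
    have hxnorm : ‖x‖ ≤ ‖y - 1‖ := by
      apply norm_tsum_le_of_forall_le_of_nonneg (norm_nonneg _)
      intro n
      calc ‖δ n‖ ≤ ‖y - 1‖ * B ^ n := hun n
        _ ≤ ‖y - 1‖ * 1 := by
            apply mul_le_mul_of_nonneg_left _ (norm_nonneg _)
            exact pow_le_one₀ hB0 hB1.le
        _ = ‖y - 1‖ := mul_one _
    have hxS : ‖x‖ < B := lt_of_le_of_lt hxnorm hy
    set s : ℕ → ℚ_[p] := fun n => ∑ k ∈ Finset.range n, δ k with hs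
    have hsnorm : ∀ n, ‖s n‖ < B := by
      intro n
      refine lt_of_le_of_lt ?_ hy
      apply norm_sum_le_of_forall_le_of_nonneg (norm_nonneg _)
      intro k _
      calc ‖δ k‖ ≤ ‖y - 1‖ * B ^ k := hun k
        _ ≤ ‖y - 1‖ * 1 := by
            apply mul_le_mul_of_nonneg_left _ (norm_nonneg _)
            exact pow_le_one₀ hB0 hB1.le
        _ = ‖y - 1‖ := mul_one _
    have hInv : ∀ n, padicExp p (s n) * u n = y := by
      intro n
      induction n with
      | zero => simp [hs, hu, exp_zero']
      | succ n ih =>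
        have h1 : s (n + 1) = s n + δ n := Finset.sum_range_succ _ _
        have h2 : u (n + 1) = u n * (padicExp p (δ n))⁻¹ := by
          simp only [hu, hδ, Function.iterate_succ_apply']
          rfl
        have hne : padicExp p (δ n) ≠ 0 := exp_ne_zero (small (hulst n))
        rw [h1, h2, exp_add (small (hsnorm n)) (small (hulst n))]
        have hre : padicExp p (s n) * padicExp p (δ n) * (u n * (padicExp p (δ n))⁻¹)
            = padicExp p (s n) * u n * (padicExp p (δ n) * (padicExp p (δ n))⁻¹) := by ring
        rw [hre, mul_inv_cancel₀ hne, mul_one, ih]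
    have hu1 : Tendsto u atTop (nhds 1) := by
      rw [tendsto_iff_norm_sub_tendsto_zero]
      apply squeeze_zero (fun n => norm_nonneg _) hun
      simpa using
        (tendsto_pow_atTop_nhds_zero_of_lt_one hB0 hB1).const_mul ‖y - 1‖
    have hstox : Tendsto s atTop (nhds x) := hsummable.hasSum.tendsto_sum_nat
    have hexp : Tendsto (fun n => padicExp p (s n)) atTop (nhds (padicExp p x)) := by
      rw [tendsto_iff_norm_sub_tendsto_zero]
      have h1 : Tendsto (fun n => ‖s n - x‖) atTop (nhds 0) :=
        tendsto_iff_norm_sub_tendsto_zero.mp hstox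
      apply h1.congr
      intro n
      exact (norm_exp_sub_exp (small (hsnorm n)) (small hxS)).symm
    have hfinal : padicExp p x * 1 = y := by
      apply tendsto_nhds_unique (f := fun n => padicExp p (s n) * u n) (l := atTop)
      · exact hexp.mul hu1
      · exact (tendsto_congr fun n => (hInv n)).mpr tendsto_const_nhds
    rw [mul_one] at hfinal
    exact ⟨x, hxS, hfinal⟩
  · -- additivity
    intro x₁ x₂ h1 h2
    rw [hBd] at h1 h2
    exact exp_add (small h1) (small h2)
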